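/- Central limit theorem for ⊞^t: let t ∈ ℝ \ ℤ_{≥0} and let A ∈ U = 1 + zℝ⟦z⟧ satisfy κ_1^t(A) = 0 and κ_2^t(A) = 1. Then D_{1/√m}[A^{⊞^t m}] → H^{(t)} as m → ∞, in the sense that for every n ≥ 0 the n-th coefficient of D_{1/√m}[A^{⊞^t m}] converges to the n-th coefficient of H^{(t)}. -/

import Mathlib

open PowerSeries Finset

/-- Falling factorial `(t)_k = t (t-1) ⋯ (t-k+1)`. -/
noncomputable def ffall (t : ℝ) (k : ℕ) : ℝ := ∏ i ∈ Finset.range k, (t - i)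

/-- The `t`-deformed convolution of formal power series. -/
noncomputable def tconv (t : ℝ) (A B : PowerSeries ℝ) : PowerSeries ℝ :=
  PowerSeries.mk fun k => ∑ p ∈ Finset.HasAntidiagonal.antidiagonal k,
    ffall t k / (ffall t p.1 * ffall t p.2)
      * (PowerSeries.coeff (R := ℝ) p.1 A) * (PowerSeries.coeff (R := ℝ) p.2 B)

/-- Formal logarithm of a power series (with constant term 1):
`log A = - Σ_{k ≥ 1} (1 - A)^k / k`. -/
noncomputable def flog (A : PowerSeries ℝ) : PowerSeries ℝ :=
  PowerSeries.mk fun n =>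
    -∑ k ∈ Finset.range (n + 1), (PowerSeries.coeff (R := ℝ) n ((1 - A) ^ k)) / k

/-- Power sums of `A ∈ 1 + zℝ⟦z⟧`, defined by `Σ p_k(A) z^k = -z (d/dz) log A(z)`. -/
noncomputable def powSum (A : PowerSeries ℝ) (k : ℕ) : ℝ :=
  -(k : ℝ) * PowerSeries.coeff (R := ℝ) k (flog A)

/-- `E^t[A](z) = Σ_k (t^k/(t)_k) a_k z^k`. -/
noncomputable def Et (t : ℝ) (A : PowerSeries ℝ) : PowerSeries ℝ :=
  PowerSeries.mk fun k => t ^ k / ffall t k * PowerSeries.coeff (R := ℝ) k A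

/-- The `t`-deformed cumulant transform `C^t[A](z) = -(z/t)(d/dz) log(E^t[A](z))`. -/
noncomputable def Ct (t : ℝ) (A : PowerSeries ℝ) : PowerSeries ℝ :=
  PowerSeries.mk fun n => -(1 / t) * ((n : ℝ) * PowerSeries.coeff (R := ℝ) n (flog (Et t A)))

/-- The `i`-th `t`-deformed cumulant of `A`. -/
noncomputable def kappa (t : ℝ) (A : PowerSeries ℝ) (i : ℕ) : ℝ :=
  PowerSeries.coeff (R := ℝ) i (Ct t A)

/-- The `m`-fold `⊞^t`-convolution power `A^{⊞^t m}`. -/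
noncomputable def convPow (t : ℝ) (A : PowerSeries ℝ) : ℕ → PowerSeries ℝ
  | 0 => 1
  | n + 1 => tconv t A (convPow t A n)

/-- The `t`-deformed Hermite series. -/
noncomputable def Ht (t : ℝ) : PowerSeries ℝ :=
  PowerSeries.mk fun n =>
    if Even n then
      (-1) ^ (n / 2) * ffall t n / (t ^ (n / 2) * (2 ^ (n / 2) * ((n / 2).factorial : ℝ)))
    else 0

/-! ### Auxiliary lemmas -/


lemma ffall_ne_zero {t : ℝ} (ht : ∀ n : ℕ, t ≠ (n : ℝ)) (k : ℕ) : ffall t k ≠ 0 := by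
  apply Finset.prod_ne_zero_iff.2
  intro i _
  exact sub_ne_zero.2 (ht i)

lemma coeff_Et (t : ℝ) (A : PowerSeries ℝ) (k : ℕ) :
    PowerSeries.coeff (R := ℝ) k (Et t A) = t ^ k / ffall t k * PowerSeries.coeff (R := ℝ) k A := by
  simp [Et]

lemma Et_tconv {t : ℝ} (ht : ∀ n : ℕ, t ≠ (n : ℝ)) (A B : PowerSeries ℝ) :
    Et t (tconv t A B) = Et t A * Et t B := by
  ext k
  rw [coeff_Et, PowerSeries.coeff_mul]
  simp only [tconv, coeff_mk, Finset.mul_sum]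
  apply Finset.sum_congr rfl
  intro p hp
  rw [Finset.HasAntidiagonal.mem_antidiagonal] at hp
  rw [coeff_Et, coeff_Et]
  have h1 := ffall_ne_zero ht p.1
  have h2 := ffall_ne_zero ht p.2
  have hk := ffall_ne_zero ht k
  field_simp
  rw [← hp, pow_add]
  ring

lemma Et_one (t : ℝ) : Et t 1 = 1 := by
  ext k
  rw [coeff_Et]
  rcases Nat.eq_zero_or_pos k with h | h
  · subst h; simp [ffall]
  · simp [PowerSeries.coeff_one, Nat.pos_iff_ne_zero.1 h]

lemma Et_convPow {t : ℝ} (ht : ∀ n : ℕ, t ≠ (n : ℝ)) (A : PowerSeries ℝ) (m : ℕ) :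
    Et t (convPow t A m) = (Et t A) ^ m := by
  induction m with
  | zero => simpa [convPow] using Et_one t
  | succ m ih => rw [convPow, Et_tconv ht, ih, pow_succ']

lemma coeff_of_Et {t : ℝ} (ht : ∀ n : ℕ, t ≠ (n : ℝ)) (X : PowerSeries ℝ) (n : ℕ) :
    PowerSeries.coeff (R := ℝ) n X = ffall t n / t ^ n * PowerSeries.coeff (R := ℝ) n (Et t X) := by
  have h0 : t ≠ 0 := by simpa using ht 0
  rw [coeff_Et]
  have := ffall_ne_zero ht n
  field_simp

lemma coeff_flog_one (B : PowerSeries ℝ) :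
    PowerSeries.coeff (R := ℝ) 1 (flog B) = PowerSeries.coeff (R := ℝ) 1 B := by
  simp [flog, Finset.sum_range_succ]

lemma coeff_flog_two (B : PowerSeries ℝ) (h0 : PowerSeries.constantCoeff (R := ℝ) B = 1)
    (h1 : PowerSeries.coeff (R := ℝ) 1 B = 0) :
    PowerSeries.coeff (R := ℝ) 2 (flog B) = PowerSeries.coeff (R := ℝ) 2 B := by
  have hsq : PowerSeries.coeff (R := ℝ) 2 ((1 - B) ^ 2) = 0 := by
    rw [sq, PowerSeries.coeff_mul]
    rw [Finset.Nat.sum_antidiagonal_eq_sum_range_succ_mk]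
    have hc0 : PowerSeries.coeff (R := ℝ) 0 (1 - B) = 0 := by
      simp [PowerSeries.coeff_zero_eq_constantCoeff, h0]
    have hc1 : PowerSeries.coeff (R := ℝ) 1 (1 - B) = 0 := by
      simp [h1]
    simp [Finset.sum_range_succ, hc0, hc1, h0, h1]
  simp [flog, Finset.sum_range_succ, hsq]

lemma coeff_pow_lt {f : PowerSeries ℝ} (h0 : PowerSeries.coeff (R := ℝ) 0 f = 0) :
    ∀ k n : ℕ, n < k → PowerSeries.coeff (R := ℝ) n (f ^ k) = 0 := by
  intro k
  induction k with
  | zero => intro n hn; omega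
  | succ k ih =>
    intro n hn
    rw [pow_succ', PowerSeries.coeff_mul]
    apply Finset.sum_eq_zero
    intro p hp
    rw [Finset.HasAntidiagonal.mem_antidiagonal] at hp
    rcases Nat.eq_zero_or_pos p.1 with h | h
    · rw [h, h0]; ring
    · rw [ih p.2 (by omega)]; ring

lemma coeff_pow_lt_two {f : PowerSeries ℝ} (h0 : PowerSeries.coeff (R := ℝ) 0 f = 0)
    (h1 : PowerSeries.coeff (R := ℝ) 1 f = 0) :
    ∀ k n : ℕ, n < 2 * k → PowerSeries.coeff (R := ℝ) n (f ^ k) = 0 := by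
  intro k
  induction k with
  | zero => intro n hn; omega
  | succ k ih =>
    intro n hn
    rw [pow_succ', PowerSeries.coeff_mul]
    apply Finset.sum_eq_zero
    intro p hp
    rw [Finset.HasAntidiagonal.mem_antidiagonal] at hp
    rcases Nat.lt_or_ge p.1 2 with h | h
    · interval_cases h' : p.1
      · rw [h0]; ring
      · rw [h1]; ring
    · rw [ih p.2 (by omega)]; ring

lemma coeff_pow_lead {f : PowerSeries ℝ} (h0 : PowerSeries.coeff (R := ℝ) 0 f = 0)
    (h1 : PowerSeries.coeff (R := ℝ) 1 f = 0) :
    ∀ k : ℕ, PowerSeries.coeff (R := ℝ) (2 * k) (f ^ k) = (PowerSeries.coeff (R := ℝ) 2 f) ^ k := by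
  intro k
  induction k with
  | zero => simp
  | succ k ih =>
    rw [pow_succ', PowerSeries.coeff_mul]
    rw [Finset.sum_eq_single (2, 2 * k)]
    · rw [ih, pow_succ']
    · intro p hp hne
      rw [Finset.HasAntidiagonal.mem_antidiagonal] at hp
      rcases Nat.lt_or_ge p.1 2 with h | h
      · interval_cases h' : p.1
        · rw [h0]; ring
        · rw [h1]; ring
      · rcases Nat.lt_or_ge p.2 (2 * k) with h2 | h2
        · rw [coeff_pow_lt_two h0 h1 k p.2 h2]; ring
        · exfalso; apply hne
          have : p.2 = 2 * k := by omega
          exact Prod.ext (by omega) this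
    · intro h
      exfalso; exact h (by rw [Finset.HasAntidiagonal.mem_antidiagonal]; ring)

lemma coeff_pow_binom {B : PowerSeries ℝ} (hB : PowerSeries.coeff (R := ℝ) 0 (B - 1) = 0)
    (n m : ℕ) :
    PowerSeries.coeff (R := ℝ) n (B ^ m)
      = ∑ k ∈ Finset.range (n + 1),
          (m.choose k : ℝ) * PowerSeries.coeff (R := ℝ) n ((B - 1) ^ k) := by
  have hB' : B = (B - 1) + 1 := by ring
  conv_lhs => rw [hB']
  rw [add_pow]
  rw [map_sum]
  have key : ∀ k : ℕ, PowerSeries.coeff (R := ℝ) n ((B - 1) ^ k * 1 ^ (m - k) * (m.choose k : PowerSeries ℝ))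
      = (m.choose k : ℝ) * PowerSeries.coeff (R := ℝ) n ((B - 1) ^ k) := by
    intro k
    rw [one_pow, mul_one]
    rw [← map_natCast (PowerSeries.C (R := ℝ)) (m.choose k), PowerSeries.coeff_mul_C]
    ring
  simp only [key]
  rcases le_or_gt (m + 1) (n + 1) with h | h
  · rw [← Finset.sum_subset (Finset.range_subset_range.2 h)]
    intro x hx hnx
    rw [Finset.mem_range] at hx
    rw [Finset.mem_range, not_lt] at hnx
    rw [Nat.choose_eq_zero_of_lt (by omega)]
    simp
  · rw [Finset.sum_subset (Finset.range_subset_range.2 (le_of_lt h))]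
    intro x hx hnx
    rw [Finset.mem_range, not_lt] at hnx
    rw [coeff_pow_lt hB x n (by omega)]
    simp

open Filter in
lemma one_div_sqrt_tendsto : Tendsto (fun m : ℕ => 1 / Real.sqrt m) atTop (nhds 0) := by
  have h := (Real.continuous_sqrt.tendsto 0).comp tendsto_one_div_atTop_nhds_zero_nat
  simpa [Function.comp_def, Real.sqrt_eq_zero', ← Real.sqrt_inv, one_div] using h

open Filter in
lemma choose_scaled_tendsto (k n : ℕ) (hkn : 2 * k ≤ n) :
    Tendsto (fun m : ℕ => (1 / Real.sqrt m) ^ n * (m.choose k : ℝ)) atTop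
      (nhds (if 2 * k = n then 1 / (k.factorial : ℝ) else 0)) := by
  have key : ∀ m : ℕ, k ≤ m → 1 ≤ m →
      (1 / Real.sqrt m) ^ n * (m.choose k : ℝ)
        = (1 / (k.factorial : ℝ)) * (∏ i ∈ Finset.range k, (1 - (i : ℝ) / m))
            * (1 / Real.sqrt m) ^ (n - 2 * k) := by
    intro m hkm h1m
    have hm0 : (0:ℝ) < m := by exact_mod_cast h1m
    have hs : Real.sqrt m > 0 := Real.sqrt_pos.2 hm0
    have hms : Real.sqrt m * Real.sqrt m = m := Real.mul_self_sqrt (le_of_lt hm0)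
    have hdf : (m.descFactorial k : ℝ) = (k.factorial : ℝ) * (m.choose k : ℝ) := by
      exact_mod_cast congrArg (Nat.cast : ℕ → ℝ) (Nat.descFactorial_eq_factorial_mul_choose m k)
    have hprod : (m.descFactorial k : ℝ) = ∏ i ∈ Finset.range k, ((m : ℝ) - i) := by
      rw [Nat.descFactorial_eq_prod_range]
      push_cast [Nat.cast_prod]
      apply Finset.prod_congr rfl
      intro i hi
      rw [Finset.mem_range] at hi
      rw [Nat.cast_sub (by omega)]
    have hfac : ∀ i ∈ Finset.range k, ((m:ℝ) - i) = (m:ℝ) * (1 - (i:ℝ)/m) := by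
      intro i _; field_simp
    have h2 : (m.choose k : ℝ)
        = (1 / (k.factorial : ℝ)) * (m:ℝ)^k * ∏ i ∈ Finset.range k, (1 - (i : ℝ) / m) := by
      have hfk : (k.factorial : ℝ) ≠ 0 := by exact_mod_cast k.factorial_ne_zero
      have : (k.factorial : ℝ) * (m.choose k : ℝ)
          = (m:ℝ)^k * ∏ i ∈ Finset.range k, (1 - (i : ℝ) / m) := by
        rw [← hdf, hprod, Finset.prod_congr rfl hfac, Finset.prod_mul_distrib,
          Finset.prod_const, Finset.card_range]
      have h2' : (m.choose k : ℝ) = 1/(k.factorial:ℝ) * ((k.factorial:ℝ) * (m.choose k:ℝ)) := by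
        field_simp
      rw [this] at h2'
      rw [h2']; ring
    rw [h2]
    have hmk : (m:ℝ)^k = (Real.sqrt m)^(2*k) := by
      rw [pow_mul, Real.sq_sqrt (le_of_lt hm0)]
    have hn : (1 / Real.sqrt m) ^ n = (1 / Real.sqrt m) ^ (2*k) * (1 / Real.sqrt m) ^ (n - 2*k) := by
      rw [← pow_add]; congr 1; omega
    rw [hn, hmk]
    have : (1 / Real.sqrt m) ^ (2*k) * (Real.sqrt m)^(2*k) = 1 := by
      rw [one_div, ← mul_pow, inv_mul_cancel₀ (ne_of_gt hs), one_pow]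
    linear_combination (1 / (k.factorial : ℝ) * (∏ i ∈ Finset.range k, (1 - (i : ℝ) / m)) * (1 / Real.sqrt m) ^ (n - 2 * k)) * this
  have hlim : Tendsto (fun m : ℕ =>
      (1 / (k.factorial : ℝ)) * (∏ i ∈ Finset.range k, (1 - (i : ℝ) / m))
        * (1 / Real.sqrt m) ^ (n - 2 * k)) atTop
      (nhds (if 2 * k = n then 1 / (k.factorial : ℝ) else 0)) := by
    have hp : Tendsto (fun m : ℕ => ∏ i ∈ Finset.range k, (1 - (i:ℝ)/m)) atTop (nhds 1) := by
      have : Tendsto (fun m : ℕ => ∏ i ∈ Finset.range k, (1 - (i:ℝ)/m)) atTop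
          (nhds (∏ _i ∈ Finset.range k, 1)) := by
        apply tendsto_finset_prod
        intro i _
        simpa using (tendsto_const_nhds (x := (1:ℝ))).sub (tendsto_const_div_atTop_nhds_zero_nat (i:ℝ))
      simpa using this
    rcases eq_or_ne (2 * k) n with he | he
    · rw [if_pos he]
      have h0 : n - 2 * k = 0 := by omega
      simp only [h0, pow_zero, mul_one]
      simpa using (tendsto_const_nhds (x := 1 / (k.factorial:ℝ))).mul hp
    · rw [if_neg he]
      have hz : Tendsto (fun m : ℕ => (1 / Real.sqrt m) ^ (n - 2*k)) atTop (nhds 0) := by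
        have := one_div_sqrt_tendsto.pow (n - 2*k)
        simpa [zero_pow (by omega : n - 2*k ≠ 0)] using this
      simpa using ((tendsto_const_nhds (x := 1 / (k.factorial:ℝ))).mul hp).mul hz
  apply hlim.congr'
  filter_upwards [eventually_ge_atTop k, eventually_ge_atTop 1] with m h1 h2
  exact (key m h1 h2).symm

/-- Central limit theorem for `⊞^t`: if `A ∈ U` has `κ_1^t(A) = 0` and `κ_2^t(A) = 1`,
then `D_{1/√m}[A^{⊞^t m}] → H^{(t)}` coefficientwise as `m → ∞`. -/
theorem clt_tconv (t : ℝ) (ht : ∀ n : ℕ, t ≠ (n : ℝ))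
    (A : PowerSeries ℝ) (hA : PowerSeries.constantCoeff (R := ℝ) A = 1)
    (h₁ : kappa t A 1 = 0) (h₂ : kappa t A 2 = 1) (n : ℕ) :
    Filter.Tendsto
      (fun m : ℕ =>
        PowerSeries.coeff (R := ℝ) n
          (PowerSeries.rescale (1 / Real.sqrt (m : ℝ)) (convPow t A m)))
      Filter.atTop (nhds (PowerSeries.coeff (R := ℝ) n (Ht t))) := by
  have ht0 : t ≠ 0 := by simpa using ht 0
  set B : PowerSeries ℝ := Et t A with hB
  -- coefficients of B
  have hB0 : PowerSeries.constantCoeff (R := ℝ) B = 1 := by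
    rw [← PowerSeries.coeff_zero_eq_constantCoeff_apply, hB, coeff_Et]
    simp [ffall, PowerSeries.coeff_zero_eq_constantCoeff, hA]
  have hB1 : PowerSeries.coeff (R := ℝ) 1 B = 0 := by
    have : kappa t A 1 = -(1/t) * (1 * PowerSeries.coeff (R := ℝ) 1 (flog B)) := by
      simp [kappa, Ct, hB]
    rw [h₁] at this
    rw [coeff_flog_one] at this
    field_simp at this
    linarith
  have hB2 : PowerSeries.coeff (R := ℝ) 2 B = -t / 2 := by
    have hk : kappa t A 2 = -(1/t) * (2 * PowerSeries.coeff (R := ℝ) 2 (flog B)) := by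
      simp [kappa, Ct, hB]
    rw [h₂, coeff_flog_two B hB0 hB1] at hk
    field_simp at hk
    linarith
  -- coefficients of B - 1
  have hC0 : PowerSeries.coeff (R := ℝ) 0 (B - 1) = 0 := by
    simp [PowerSeries.coeff_zero_eq_constantCoeff, hB0]
  have hC1 : PowerSeries.coeff (R := ℝ) 1 (B - 1) = 0 := by simp [hB1]
  have hC2 : PowerSeries.coeff (R := ℝ) 2 (B - 1) = -t / 2 := by
    simp [hB2, PowerSeries.coeff_one]
  -- rewrite the coefficient as explicit sum
  set c : ℕ → ℝ := fun k => PowerSeries.coeff (R := ℝ) n ((B - 1) ^ k) with hc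
  have hcoeff : ∀ m : ℕ,
      PowerSeries.coeff (R := ℝ) n (PowerSeries.rescale (1 / Real.sqrt (m : ℝ)) (convPow t A m))
        = ffall t n / t ^ n * ∑ k ∈ Finset.range (n + 1),
            ((1 / Real.sqrt m) ^ n * (m.choose k : ℝ)) * c k := by
    intro m
    rw [PowerSeries.coeff_rescale]
    rw [coeff_of_Et ht (convPow t A m) n, Et_convPow ht, ← hB]
    rw [coeff_pow_binom hC0 n m, Finset.mul_sum, Finset.mul_sum]
    conv_rhs => rw [Finset.mul_sum]
    apply Finset.sum_congr rfl
    intro k _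
    simp only [hc]
    ring
  -- the limit of the sum
  have hsum : Filter.Tendsto
      (fun m : ℕ => ∑ k ∈ Finset.range (n + 1),
        ((1 / Real.sqrt m) ^ n * (m.choose k : ℝ)) * c k)
      Filter.atTop
      (nhds (∑ k ∈ Finset.range (n + 1),
        (if 2 * k = n then 1 / (k.factorial : ℝ) else 0) * c k)) := by
    apply tendsto_finset_sum
    intro k _
    rcases le_or_gt (2 * k) n with hkn | hkn
    · exact (choose_scaled_tendsto k n hkn).mul_const (c k)
    · have hck : c k = 0 := coeff_pow_lt_two hC0 hC1 k n hkn
      rw [hck]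
      simp only [mul_zero]
      exact tendsto_const_nhds
  -- identify the limit with the Hermite coefficient
  have hHt : PowerSeries.coeff (R := ℝ) n (Ht t)
      = ffall t n / t ^ n * ∑ k ∈ Finset.range (n + 1),
          (if 2 * k = n then 1 / (k.factorial : ℝ) else 0) * c k := by
    by_cases hev : Even n
    · obtain ⟨k₀, hk₀⟩ := hev
      have hn2 : n = 2 * k₀ := by omega
      have hsum' : ∑ k ∈ Finset.range (n + 1),
          (if 2 * k = n then 1 / (k.factorial : ℝ) else 0) * c k
            = 1 / (k₀.factorial : ℝ) * c k₀ := by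
        rw [Finset.sum_eq_single k₀]
        · rw [if_pos (by omega)]
        · intro k _ hkne
          rw [if_neg (by omega)]
          ring
        · intro h
          exfalso; exact h (Finset.mem_range.2 (by omega))
      rw [hsum']
      have hck : c k₀ = (-t / 2) ^ k₀ := by
        rw [hc]
        simp only
        rw [hn2, coeff_pow_lead hC0 hC1 k₀, hC2]
      rw [hck]
      have hn2' : n / 2 = k₀ := by omega
      rw [Ht, PowerSeries.coeff_mk, if_pos ⟨k₀, hk₀⟩, hn2']
      have hffn := ffall_ne_zero ht n
      have hfk : (k₀.factorial : ℝ) ≠ 0 := by exact_mod_cast k₀.factorial_ne_zero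
      have htk : t ^ n = t ^ k₀ * t ^ k₀ := by
        rw [show n = k₀ + k₀ by omega, pow_add]
      have hneg : (-t / 2) ^ k₀ = (-1) ^ k₀ * t ^ k₀ / 2 ^ k₀ := by
        rw [div_pow, neg_pow]
      rw [htk, hneg]
      have h2k : (2:ℝ) ^ k₀ ≠ 0 := by positivity
      have htp : t ^ k₀ ≠ 0 := pow_ne_zero _ ht0
      field_simp
    · -- odd case: both sides are 0
      have hall : ∀ k ∈ Finset.range (n + 1),
          (if 2 * k = n then 1 / (k.factorial : ℝ) else 0) * c k = 0 := by
        intro k _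
        rw [if_neg (fun h => hev ⟨k, by omega⟩)]
        ring
      rw [Finset.sum_eq_zero hall, Ht, PowerSeries.coeff_mk, if_neg hev]
      ring
  rw [hHt]
  have := hsum.const_mul (ffall t n / t ^ n)
  apply this.congr
  intro m
  exact (hcoeff m).symm
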